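/- Every nonzero vector α ∈ V is a positive scalar multiple of an integer vector in W^N: for every α ∈ V with α ≠ 0 there exist q > 0 and β ∈ W^N such that α = q·β. Consequently there exists a finite set V̂ ⊆ W^N such that every nonzero α ∈ V can be written α = q·β with β ∈ V̂ and q > 0. -/

import Mathlib

open MeasureTheory ProbabilityTheory Finset Filter

noncomputable section

/-- Channel state space `S`: N×K matrices with entries in {0,…,M}. -/
abbrev ChanState (N K M : ℕ) := Fin N → Fin K → Fin (M + 1)

/-- The real-valued channel matrix `C_s` of a channel state `s`. -/
def Cmat {N K M : ℕ} (s : ChanState N K M) : Fin N → Fin K → ℝ :=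
  fun n k => ((s n k : ℕ) : ℝ)

/-- The 0/1 allocation matrix `I ∈ 𝓘` determined by an assignment `f` of servers to
queues: column `k` has its single 1 in row `f k`. -/
def allocMat {N K : ℕ} (f : Fin K → Fin N) : Fin N → Fin K → ℝ :=
  fun n k => if f k = n then 1 else 0

/-- The weight `Σ_n Σ_k α_n c_{n,k} I_{n,k}` of the allocation matrix `I = allocMat f`. -/
def weight {N K : ℕ} (α : Fin N → ℝ) (c : Fin N → Fin K → ℝ) (f : Fin K → Fin N) : ℝ :=
  ∑ n, ∑ k, α n * c n k * allocMat f n k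

/-- `max_{I ∈ 𝓘} Σ_n Σ_k α_n c_{n,k} I_{n,k}`. -/
def maxWeight {N K : ℕ} [NeZero N] (α : Fin N → ℝ) (c : Fin N → Fin K → ℝ) : ℝ :=
  Finset.univ.sup' Finset.univ_nonempty (weight α c)

/-- `b(α) = Σ_{s∈S} π_s max_{I∈𝓘} Σ_n Σ_k α_n (C_s)_{n,k} I_{n,k}`. -/
def bCoef {N K M : ℕ} [NeZero N] (π : ChanState N K M → ℝ) (α : Fin N → ℝ) : ℝ :=
  ∑ s : ChanState N K M, π s * maxWeight α (Cmat s)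

/-- The rate vector `R^{(g)}` of the deterministic policy `g`. -/
def rateVec {N K M : ℕ} (π : ChanState N K M → ℝ)
    (g : ChanState N K M → Fin K → Fin N) : Fin N → ℝ :=
  fun n => ∑ s : ChanState N K M, π s * ∑ k, Cmat s n k * allocMat (g s) n k

/-- The achievable-rate polytope `P`, the convex hull of the rate vectors of the
deterministic policies. -/
def ratePolytope {N K M : ℕ} (π : ChanState N K M → ℝ) : Set (Fin N → ℝ) :=
  convexHull ℝ {r | ∃ g : ChanState N K M → Fin K → Fin N, r = rateVec π g}

/-- `W`: products of N−1 factors from {0,…,M}, viewed inside ℝ. -/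
def Wset (N M : ℕ) : Set ℝ :=
  {w | ∃ m : Fin (N - 1) → ℕ, (∀ j, m j ≤ M) ∧ w = ∏ j, (m j : ℝ)}

/-- The set `V` of nonnegative weight vectors from the paper. -/
def Vset (N M : ℕ) : Set (Fin N → ℝ) :=
  {α | (∀ n, 0 ≤ α n) ∧
    ∀ U : Finset (Fin N), U.Nonempty → U ≠ Finset.univ →
      (∃ i ∈ U, α i ≠ 0) → (∃ j ∈ Uᶜ, α j ≠ 0) →
      ∃ i ∈ U, ∃ j ∈ Uᶜ, ∃ m ∈ Finset.Icc 1 M, ∃ n ∈ Finset.Icc 1 M,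
        0 < α i ∧ 0 < α j ∧ α i * (m : ℝ) = α j * (n : ℝ)}

/-- The product Bernoulli distribution on ON-OFF (M = 1) channel states. -/
def bernoulliPi {N K : ℕ} (p : Fin N → Fin K → ℝ) : ChanState N K 1 → ℝ :=
  fun s => ∏ n, ∏ k, (if (s n k : ℕ) = 1 then p n k else 1 - p n k)

end



/-- Padding lemma: a product of at most `N-1` factors each `≤ M` lies in `Wset N M`. -/
lemma list_prod_mem_Wset {N M : ℕ} (hN : 2 ≤ N) (hM : 1 ≤ M) (l : List ℕ)
    (hlen : l.length ≤ N - 1) (hle : ∀ a ∈ l, a ≤ M) :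
    ((l.map (Nat.cast : ℕ → ℝ)).prod) ∈ Wset N M := by
  classical
  set l' : List ℕ := l ++ List.replicate (N - 1 - l.length) 1 with hl'
  have hlen' : N - 1 = l'.length := by
    simp [hl', List.length_append, List.length_replicate]; omega
  refine ⟨fun j => l'.get (finCongr hlen' j), ?_, ?_⟩
  · intro j
    show l'.get (finCongr hlen' j) ≤ M
    have hmem : l'.get (finCongr hlen' j) ∈ l' := l'.get_mem _
    rcases List.mem_append.1 hmem with h | h
    · exact hle _ h
    · have := List.eq_of_mem_replicate h; omega
  · have h1 : ∏ j : Fin (N - 1), ((l'.get (finCongr hlen' j) : ℕ) : ℝ)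
        = ∏ i : Fin l'.length, ((l'.get i : ℕ) : ℝ) :=
      Fintype.prod_equiv (finCongr hlen') _ _ (fun j => rfl)
    have h2 : ∏ i : Fin l'.length, ((l'.get i : ℕ) : ℝ) = (l'.map (Nat.cast : ℕ → ℝ)).prod := by
      set_option linter.unnecessarySimpa false in
      simpa using Fin.prod_univ_get' l' (Nat.cast : ℕ → ℝ)
    have h3 : (l'.map (Nat.cast : ℕ → ℝ)).prod = (l.map (Nat.cast : ℕ → ℝ)).prod := by
      simp [hl', List.map_append, List.prod_append]
    rw [h1, h2, h3]

lemma zero_mem_Wset {N M : ℕ} (hN : 2 ≤ N) : (0 : ℝ) ∈ Wset N M := by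
  refine ⟨fun _ => 0, fun _ => Nat.zero_le _, ?_⟩
  have h0 : N - 1 ≠ 0 := by omega
  simp [Finset.prod_const, zero_pow h0]

/-- Invariant: on `T`, `α` is `q` times a vector of products of `T.card - 1` factors
from `[1, M]`. -/
def InvP {N : ℕ} (M : ℕ) (α : Fin N → ℝ) (T : Finset (Fin N)) : Prop :=
  ∃ q : ℝ, 0 < q ∧ ∃ β : Fin N → ℝ, ∀ n ∈ T, α n = q * β n ∧
    ∃ l : List ℕ, l.length + 1 = T.card ∧ (∀ a ∈ l, 1 ≤ a ∧ a ≤ M) ∧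
      β n = (l.map (Nat.cast : ℕ → ℝ)).prod

lemma grow {N M : ℕ} {α : Fin N → ℝ} (hα : α ∈ Vset N M)
    (S : Finset (Fin N)) (hS : S = Finset.univ.filter (fun n => α n ≠ 0)) :
    ∀ d : ℕ, ∀ T : Finset (Fin N), T.Nonempty → T ⊆ S → S.card ≤ T.card + d →
      InvP M α T → InvP M α S := by
  intro d
  induction d with
  | zero =>
    intro T _ hTS hcard hInv
    rwa [Finset.eq_of_subset_of_card_le hTS (by omega)] at hInv
  | succ d ih =>
    intro T hTne hTS hcard hInv
    by_cases hTSeq : T = S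
    · rwa [hTSeq] at hInv
    · have hssub : T ⊂ S := hTS.ssubset_of_ne hTSeq
      obtain ⟨s, hsS, hsT⟩ := Finset.exists_of_ssubset hssub
      have hαs : α s ≠ 0 := by
        have := hS ▸ hsS; simpa using (Finset.mem_filter.1 this).2
      have hTuniv : T ≠ Finset.univ := by
        intro h; exact hsT (h ▸ Finset.mem_univ s)
      obtain ⟨i, hiT, j, hjT, m, hm, n, hn, hαi, hαj, hrel⟩ :=
        hα.2 T hTne hTuniv
          ⟨hTne.choose, hTne.choose_spec, by
            have := hTS hTne.choose_spec
            have := hS ▸ this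
            simpa using (Finset.mem_filter.1 this).2⟩
          ⟨s, Finset.mem_compl.2 hsT, hαs⟩
      have hjT' : j ∉ T := Finset.mem_compl.1 hjT
      have hjS : j ∈ S := by
        rw [hS]; exact Finset.mem_filter.2 ⟨Finset.mem_univ j, ne_of_gt hαj⟩
      obtain ⟨hm1, hmM⟩ := Finset.mem_Icc.1 hm
      obtain ⟨hn1, hnM⟩ := Finset.mem_Icc.1 hn
      have hnpos : (0 : ℝ) < (n : ℝ) := by exact_mod_cast hn1
      obtain ⟨q, hq, β, hβ⟩ := hInv
      set T' : Finset (Fin N) := insert j T with hT'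
      have hcard' : T'.card = T.card + 1 := Finset.card_insert_of_notMem hjT'
      refine ih T' ⟨j, Finset.mem_insert_self j T⟩
        (Finset.insert_subset hjS hTS) (by omega) ?_
      refine ⟨q / n, div_pos hq hnpos, fun k => if k = j then β i * m else β k * n, ?_⟩
      intro k hk
      rcases Finset.mem_insert.1 hk with hkj | hkT
      · obtain ⟨hαiq, li, hlilen, hlimem, hliprod⟩ := hβ i hiT
        refine ⟨?_, m :: li, by simp [hcard', hlilen], ?_, ?_⟩
        · show α k = q / (n : ℝ) * (if k = j then β i * m else β k * n)
          rw [if_pos hkj, hkj]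
          have hαj2 : α j = α i * (m : ℝ) / (n : ℝ) := by
            field_simp
            linarith [hrel]
          rw [hαj2, hαiq]
          field_simp
        · intro a ha
          rcases List.mem_cons.1 ha with rfl | ha
          · exact ⟨hm1, hmM⟩
          · exact hlimem a ha
        · show (if k = j then β i * (m : ℝ) else β k * n)
            = ((m :: li).map (Nat.cast : ℕ → ℝ)).prod
          rw [if_pos hkj, hliprod]
          simp [List.prod_cons]
          ring
      · have hkj : k ≠ j := fun h => hjT' (h ▸ hkT)
        obtain ⟨hαkq, lk, hlklen, hlkmem, hlkprod⟩ := hβ k hkT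
        refine ⟨?_, n :: lk, by simp [hcard', hlklen], ?_, ?_⟩
        · show α k = q / (n : ℝ) * (if k = j then β i * m else β k * n)
          rw [if_neg hkj, hαkq]
          field_simp
        · intro a ha
          rcases List.mem_cons.1 ha with rfl | ha
          · exact ⟨hn1, hnM⟩
          · exact hlkmem a ha
        · show (if k = j then β i * (m : ℝ) else β k * n)
            = ((n :: lk).map (Nat.cast : ℕ → ℝ)).prod
          rw [if_neg hkj, hlkprod]
          simp [List.prod_cons]
          ring

/-- every nonzero α ∈ V is a positive scalar multiple of a vector of W^N;
consequently a finite subset V̂ ⊆ W^N suffices to represent all nonzero elements of V up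
to positive scaling. -/
theorem stmt_5
    {N M : ℕ} (hN : 2 ≤ N) (hM : 1 ≤ M) :
    (∀ α ∈ Vset N M, α ≠ 0 →
      ∃ q : ℝ, 0 < q ∧ ∃ β : Fin N → ℝ, (∀ n, β n ∈ Wset N M) ∧ α = q • β) ∧
    ∃ Vhat : Finset (Fin N → ℝ),
      (∀ β ∈ Vhat, ∀ n, β n ∈ Wset N M) ∧
      ∀ α ∈ Vset N M, α ≠ 0 → ∃ β ∈ Vhat, ∃ q : ℝ, 0 < q ∧ α = q • β := by
  classical
  have main : ∀ α ∈ Vset N M, α ≠ 0 →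
      ∃ q : ℝ, 0 < q ∧ ∃ β : Fin N → ℝ, (∀ n, β n ∈ Wset N M) ∧ α = q • β := by
    intro α hα hα0
    set S : Finset (Fin N) := Finset.univ.filter (fun n => α n ≠ 0) with hSdef
    have hSne : S.Nonempty := by
      by_contra h
      apply hα0
      funext n
      have : n ∉ S := fun hn => h ⟨n, hn⟩
      simpa [hSdef] using this
    obtain ⟨i0, hi0⟩ := hSne
    have hαi0 : α i0 ≠ 0 := by simpa [hSdef] using (Finset.mem_filter.1 hi0).2
    have hαi0pos : 0 < α i0 := lt_of_le_of_ne (hα.1 i0) (Ne.symm hαi0)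
    have hInv0 : InvP M α {i0} := by
      refine ⟨α i0, hαi0pos, fun _ => 1, ?_⟩
      intro k hk
      rw [Finset.mem_singleton] at hk
      subst hk
      exact ⟨by ring, [], by simp, by simp, by simp⟩
    obtain ⟨q, hq, β, hβ⟩ := grow hα S hSdef S.card {i0} ⟨i0, Finset.mem_singleton_self i0⟩
      (Finset.singleton_subset_iff.2 hi0) (by simp) hInv0
    have hScard : S.card ≤ N := le_trans (Finset.card_le_univ S) (by simp)
    refine ⟨q, hq, fun k => if k ∈ S then β k else 0, ?_, ?_⟩
    · intro k
      show (if k ∈ S then β k else 0) ∈ Wset N M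
      by_cases hk : k ∈ S
      · obtain ⟨_, l, hlen, hmem, hprod⟩ := hβ k hk
        rw [if_pos hk, hprod]
        exact list_prod_mem_Wset hN hM l (by omega) (fun a ha => (hmem a ha).2)
      · rw [if_neg hk]
        exact zero_mem_Wset hN
    · funext k
      by_cases hk : k ∈ S
      · rw [(hβ k hk).1]; simp [hk]
      · have : α k = 0 := by
          by_contra h
          exact hk (Finset.mem_filter.2 ⟨Finset.mem_univ k, h⟩)
        simp [hk, this]
  refine ⟨main, ?_⟩
  refine ⟨Finset.image (fun f : Fin N → Fin (N - 1) → Fin (M + 1) =>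
    fun n => ∏ j, ((f n j : ℕ) : ℝ)) Finset.univ, ?_, ?_⟩
  · intro β hβ n
    obtain ⟨f, _, rfl⟩ := Finset.mem_image.1 hβ
    exact ⟨fun j => (f n j : ℕ), fun j => Nat.lt_succ_iff.1 (f n j).isLt, rfl⟩
  · intro α hα hα0
    obtain ⟨q, hq, β, hβW, hαβ⟩ := main α hα hα0
    have hch : ∀ n, ∃ m : Fin (N - 1) → ℕ, (∀ j, m j ≤ M) ∧ β n = ∏ j, (m j : ℝ) :=
      fun n => hβW n
    choose m hmle hmprod using hch
    refine ⟨β, ?_, q, hq, hαβ⟩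
    refine Finset.mem_image.2 ⟨fun n j => ⟨m n j, Nat.lt_succ_of_le (hmle n j)⟩,
      Finset.mem_univ _, ?_⟩
    funext n
    rw [← hmprod n]
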